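/- For nonempty compact sets A, B ⊆ ℝⁿ, the infimum defining h̃(A,B) is attained: there exists an isometry φ of ℝⁿ with h(A, φ(B)) = h̃(A,B). -/

import Mathlib

set_option maxHeartbeats 1000000
set_option synthInstance.maxHeartbeats 400000

noncomputable def shapeDiff {n : ℕ} (A B : Set (EuclideanSpace ℝ (Fin n))) : ℝ :=
  sInf {r : ℝ | ∃ ψ : EuclideanSpace ℝ (Fin n) ≃ᵢ EuclideanSpace ℝ (Fin n),
    r = Metric.hausdorffDist A (ψ '' B)}

open Metric Filter Topology

theorem shapeDiff_attained {n : ℕ}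
    (A B : Set (EuclideanSpace ℝ (Fin n)))
    (hA : IsCompact A) (hB : IsCompact B)
    (hAne : A.Nonempty) (hBne : B.Nonempty) :
    ∃ φ : EuclideanSpace ℝ (Fin n) ≃ᵢ EuclideanSpace ℝ (Fin n),
      Metric.hausdorffDist A (φ '' B) = shapeDiff A B := by
  classical
  set S : Set ℝ := {r : ℝ | ∃ ψ : (EuclideanSpace ℝ (Fin n)) ≃ᵢ (EuclideanSpace ℝ (Fin n)), r = Metric.hausdorffDist A (ψ '' B)} with hS
  have hSne : S.Nonempty := ⟨_, IsometryEquiv.refl (EuclideanSpace ℝ (Fin n)), rfl⟩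
  have hSbdd : BddBelow S := ⟨0, fun r hr => by
    obtain ⟨ψ, rfl⟩ := hr; exact Metric.hausdorffDist_nonneg⟩
  obtain ⟨u, -, hu_tendsto, hu_mem⟩ := exists_seq_tendsto_sInf hSne hSbdd
  choose ψ hψ using hu_mem
  -- linear parts and translation parts
  set L : ℕ → ((EuclideanSpace ℝ (Fin n)) ≃ₗᵢ[ℝ] (EuclideanSpace ℝ (Fin n))) := fun k => (ψ k).toRealLinearIsometryEquiv with hL
  set v : ℕ → (EuclideanSpace ℝ (Fin n)) := fun k => ψ k 0 with hv
  have hdecomp : ∀ k (x : (EuclideanSpace ℝ (Fin n))), ψ k x = L k x + v k := by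
    intro k x
    simp [hL, hv, IsometryEquiv.toRealLinearIsometryEquiv_apply]
  set T : ℕ → ((EuclideanSpace ℝ (Fin n)) →L[ℝ] (EuclideanSpace ℝ (Fin n))) := fun k => (L k).toLinearIsometry.toContinuousLinearMap with hT
  have hTapp : ∀ k (x : (EuclideanSpace ℝ (Fin n))), T k x = L k x := fun k x => rfl
  have hTnorm : ∀ k, ‖T k‖ ≤ 1 := by
    intro k
    refine (T k).opNorm_le_bound zero_le_one (fun x => ?_)
    rw [hTapp, (L k).norm_map, one_mul]
  -- bound on translations
  obtain ⟨a₀, ha₀⟩ := id hAne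
  obtain ⟨b₀, hb₀⟩ := id hBne
  obtain ⟨M, hM⟩ := hu_tendsto.bddAbove_range
  have hBim : ∀ k, ((ψ k) '' B).Nonempty := fun k => hBne.image _
  have hfin : ∀ k, EMetric.hausdorffEdist A ((ψ k) '' B) ≠ ⊤ := by
    intro k
    exact Metric.hausdorffEdist_ne_top_of_nonempty_of_bounded hAne (hBim k)
      hA.isBounded ((hB.image (ψ k).continuous).isBounded)
  have hvbound : ∀ k, ‖v k‖ ≤ dist b₀ (0 : (EuclideanSpace ℝ (Fin n))) + (M + Metric.diam A + ‖a₀‖) := by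
    intro k
    have h1 : Metric.infDist (ψ k b₀) A ≤ u k := by
      rw [hψ k, Metric.hausdorffDist_comm]
      refine Metric.infDist_le_hausdorffDist_of_mem (Set.mem_image_of_mem _ hb₀) ?_
      rw [EMetric.hausdorffEdist_comm]
      exact hfin k
    have h2 : dist (ψ k b₀) a₀ ≤ Metric.infDist (ψ k b₀) A + Metric.diam A :=
      Metric.dist_le_infDist_add_diam hA.isBounded ha₀
    have h3 : u k ≤ M := hM ⟨k, rfl⟩
    calc ‖v k‖ = dist (ψ k 0) (0 : (EuclideanSpace ℝ (Fin n))) := by simp [hv, dist_eq_norm]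
      _ ≤ dist (ψ k 0) (ψ k b₀) + dist (ψ k b₀) a₀ + dist a₀ 0 := dist_triangle4 _ _ _ _
      _ = dist (0 : (EuclideanSpace ℝ (Fin n))) b₀ + dist (ψ k b₀) a₀ + ‖a₀‖ := by
          rw [(ψ k).isometry.dist_eq, dist_zero_right]
      _ ≤ dist b₀ (0:(EuclideanSpace ℝ (Fin n))) + (M + Metric.diam A + ‖a₀‖) := by
          rw [dist_comm]
          have : dist (ψ k b₀) a₀ ≤ M + Metric.diam A :=
            h2.trans (by linarith)
          linarith
  set C : ℝ := dist b₀ (0 : (EuclideanSpace ℝ (Fin n))) + (M + Metric.diam A + ‖a₀‖) with hC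
  -- compactness extraction
  haveI : ProperSpace ((EuclideanSpace ℝ (Fin n)) →L[ℝ] (EuclideanSpace ℝ (Fin n))) :=
    FiniteDimensional.proper ℝ _
  have hcompact : IsCompact ((Metric.closedBall (0 : (EuclideanSpace ℝ (Fin n)) →L[ℝ] (EuclideanSpace ℝ (Fin n))) 1) ×ˢ
      (Metric.closedBall (0 : (EuclideanSpace ℝ (Fin n))) C)) :=
    (isCompact_closedBall _ _).prod (isCompact_closedBall _ _)
  have hmem : ∀ k, (T k, v k) ∈ (Metric.closedBall (0 : (EuclideanSpace ℝ (Fin n)) →L[ℝ] (EuclideanSpace ℝ (Fin n))) 1) ×ˢ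
      (Metric.closedBall (0 : (EuclideanSpace ℝ (Fin n))) C) := by
    intro k
    constructor
    · simpa [Metric.mem_closedBall, dist_eq_norm] using hTnorm k
    · simpa [Metric.mem_closedBall, dist_eq_norm] using hvbound k
  obtain ⟨⟨Tl, vl⟩, -, g, hg_mono, hg_tendsto⟩ := hcompact.tendsto_subseq hmem
  have hT_tendsto : Tendsto (fun j => T (g j)) atTop (𝓝 Tl) :=
    (continuous_fst.tendsto _).comp hg_tendsto
  have hv_tendsto : Tendsto (fun j => v (g j)) atTop (𝓝 vl) :=
    (continuous_snd.tendsto _).comp hg_tendsto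
  -- Tl is an isometry
  have hTlnorm : ∀ x : (EuclideanSpace ℝ (Fin n)), ‖Tl x‖ = ‖x‖ := by
    intro x
    have h1 : Tendsto (fun j => T (g j) x) atTop (𝓝 (Tl x)) := by
      have : Continuous (fun f : (EuclideanSpace ℝ (Fin n)) →L[ℝ] (EuclideanSpace ℝ (Fin n)) => f x) :=
        (ContinuousLinearMap.apply ℝ (EuclideanSpace ℝ (Fin n)) x).continuous
      exact (this.tendsto _).comp hT_tendsto
    have h2 : Tendsto (fun j => ‖T (g j) x‖) atTop (𝓝 ‖Tl x‖) := h1.norm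
    have h3 : (fun j => ‖T (g j) x‖) = fun _ => ‖x‖ := by
      funext j; rw [hTapp, (L (g j)).norm_map]
    rw [h3] at h2
    exact tendsto_nhds_unique h2 tendsto_const_nhds
  set Li : (EuclideanSpace ℝ (Fin n)) →ₗᵢ[ℝ] (EuclideanSpace ℝ (Fin n)) := ⟨(Tl : (EuclideanSpace ℝ (Fin n)) →ₗ[ℝ] (EuclideanSpace ℝ (Fin n))), hTlnorm⟩ with hLi
  set Leq : (EuclideanSpace ℝ (Fin n)) ≃ₗᵢ[ℝ] (EuclideanSpace ℝ (Fin n)) := Li.toLinearIsometryEquiv rfl with hLeq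
  set φ : (EuclideanSpace ℝ (Fin n)) ≃ᵢ (EuclideanSpace ℝ (Fin n)) := Leq.toIsometryEquiv.trans (IsometryEquiv.addRight vl) with hφ
  have hφapp : ∀ x : (EuclideanSpace ℝ (Fin n)), φ x = Tl x + vl := fun x => rfl
  refine ⟨φ, ?_⟩
  -- the value is attained
  have hfinφ : EMetric.hausdorffEdist A (φ '' B) ≠ ⊤ :=
    Metric.hausdorffEdist_ne_top_of_nonempty_of_bounded hAne (hBne.image _)
      hA.isBounded ((hB.image φ.continuous).isBounded)
  have hge : shapeDiff A B ≤ Metric.hausdorffDist A (φ '' B) :=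
    csInf_le hSbdd ⟨φ, rfl⟩
  refine le_antisymm ?_ hge
  -- bound ‖b‖ on B
  obtain ⟨R, hR0, hRB⟩ : ∃ R : ℝ, 0 ≤ R ∧ ∀ b ∈ B, ‖b‖ ≤ R := by
    obtain ⟨R, hR⟩ := hB.isBounded.subset_closedBall 0
    refine ⟨max R 0, le_max_right _ _, fun b hb => ?_⟩
    have hb' := hR hb
    rw [Metric.mem_closedBall, dist_zero_right] at hb'
    exact hb'.trans (le_max_left _ _)
  set δ : ℕ → ℝ := fun j => ‖T (g j) - Tl‖ * R + dist (v (g j)) vl with hδ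
  have hδ0 : ∀ j, 0 ≤ δ j := fun j =>
    add_nonneg (mul_nonneg (norm_nonneg _) hR0) dist_nonneg
  have hδ_tendsto : Tendsto δ atTop (𝓝 0) := by
    have h1 : Tendsto (fun j => ‖T (g j) - Tl‖) atTop (𝓝 0) :=
      tendsto_iff_norm_sub_tendsto_zero.mp hT_tendsto
    have h2 : Tendsto (fun j => dist (v (g j)) vl) atTop (𝓝 0) :=
      tendsto_iff_dist_tendsto_zero.1 hv_tendsto
    have := (h1.mul_const R).add h2
    simpa using this
  -- key pointwise bound
  have hkey : ∀ j, ∀ b ∈ B, dist (ψ (g j) b) (φ b) ≤ δ j := by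
    intro j b hb
    rw [hdecomp, hφapp, dist_eq_norm]
    have : L (g j) b + v (g j) - (Tl b + vl)
        = (T (g j) - Tl) b + (v (g j) - vl) := by
      rw [ContinuousLinearMap.sub_apply, ← hTapp]; abel
    rw [this]
    calc ‖(T (g j) - Tl) b + (v (g j) - vl)‖
        ≤ ‖(T (g j) - Tl) b‖ + ‖v (g j) - vl‖ := norm_add_le _ _
      _ ≤ ‖T (g j) - Tl‖ * ‖b‖ + dist (v (g j)) vl := by
          rw [dist_eq_norm]
          exact add_le_add ((T (g j) - Tl).le_opNorm b) le_rfl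
      _ ≤ δ j := by
          refine add_le_add ?_ le_rfl
          exact mul_le_mul_of_nonneg_left (hRB b hb) (norm_nonneg _)
  have hHD : ∀ j, Metric.hausdorffDist ((ψ (g j)) '' B) (φ '' B) ≤ δ j := by
    intro j
    refine Metric.hausdorffDist_le_of_mem_dist (hδ0 j) ?_ ?_
    · rintro x ⟨b, hb, rfl⟩
      exact ⟨φ b, Set.mem_image_of_mem _ hb, hkey j b hb⟩
    · rintro y ⟨b, hb, rfl⟩
      exact ⟨ψ (g j) b, Set.mem_image_of_mem _ hb, by
        rw [dist_comm]; exact hkey j b hb⟩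
  have hle : ∀ j, Metric.hausdorffDist A (φ '' B) ≤ u (g j) + δ j := by
    intro j
    calc Metric.hausdorffDist A (φ '' B)
        ≤ Metric.hausdorffDist A ((ψ (g j)) '' B)
          + Metric.hausdorffDist ((ψ (g j)) '' B) (φ '' B) :=
          Metric.hausdorffDist_triangle (hfin (g j))
      _ ≤ u (g j) + δ j := add_le_add (le_of_eq (hψ (g j)).symm) (hHD j)
  have hlim : Tendsto (fun j => u (g j) + δ j) atTop (𝓝 (sInf S)) := by
    have h1 : Tendsto (fun j => u (g j)) atTop (𝓝 (sInf S)) :=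
      hu_tendsto.comp hg_mono.tendsto_atTop
    simpa using h1.add hδ_tendsto
  exact ge_of_tendsto hlim (Filter.Eventually.of_forall hle)
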